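/- Let N ≥ 1, h > 0 with Nh = 1, and let V^{k+1}, V^k ∈ ℝ^N be N-periodic vectors. Define F_d[U] = (1/2)·Σ_{i=0}^{N−1} ((δ⁺_i V)² + (δ⁻_i V)²)·h where U_i = V_i². If V_i^{k+1} + V_i^k ≠ 0 for all i, then F_d[U^{k+1}] − F_d[U^k] = −Σ_{i=0}^{N−1} [δ^{⟨2⟩}_i(V^{k+1} + V^k)/(V_i^{k+1} + V_i^k)]·(U_i^{k+1} − U_i^k)·h, where δ^{⟨2⟩}_i = δ⁺_i δ⁻_i. -/

import Mathlib

lemma shift_sum_aux (N : ℕ) (f : ℤ → ℝ) (hf : ∀ i : ℤ, f (i + N) = f i) :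
    ∑ i ∈ Finset.range N, f ((i : ℤ) + 1) = ∑ i ∈ Finset.range N, f (i : ℤ) := by
  have hfN : f (N : ℤ) = f 0 := by simpa using hf 0
  have h1 := Finset.sum_range_succ (fun n : ℕ => f (n : ℤ)) N
  have h2 := Finset.sum_range_succ' (fun n : ℕ => f (n : ℤ)) N
  simp only [Nat.cast_zero, Nat.cast_add, Nat.cast_one, hfN] at h1 h2
  linarith [h1, h2]

/-- Discrete chain rule for the discrete Fisher information:
`V' = V^{k+1}`, `V = V^k` are `N`-periodic vectors, `U' = V'²`, `U = V²`,
`F_d[U] = (1/2) Σᵢ ((δ⁺ᵢV)² + (δ⁻ᵢV)²) h`, and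
`δ⟨2⟩ᵢ X = (X (i+1) - 2 X i + X (i-1))/h²`. -/
theorem stmt_17 (N : ℕ) (hN : 1 ≤ N) (h : ℝ) (hh : 0 < h) (hNh : (N:ℝ) * h = 1)
    (V' V : ℤ → ℝ) (hV' : ∀ i : ℤ, V' (i + N) = V' i) (hV : ∀ i : ℤ, V (i + N) = V i)
    (hne : ∀ i : ℤ, V' i + V i ≠ 0) :
    (1/2) * ∑ i ∈ Finset.range N,
        (((V' (i+1) - V' i)/h)^2 + ((V' i - V' (i-1))/h)^2) * h
      - (1/2) * ∑ i ∈ Finset.range N,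
        (((V (i+1) - V i)/h)^2 + ((V i - V (i-1))/h)^2) * h =
    - ∑ i ∈ Finset.range N,
        ((((V' (i+1) + V (i+1)) - 2*(V' i + V i) + (V' (i-1) + V (i-1)))/h^2)
          / (V' i + V i)) * ((V' i)^2 - (V i)^2) * h := by
  have hh' : h ≠ 0 := ne_of_gt hh
  set W : ℤ → ℝ := fun i => V' i + V i with hWdef
  set D : ℤ → ℝ := fun i => V' i - V i with hDdef
  set g : ℤ → ℝ := fun i => W i * D i + W i * D (i-1) - W (i-1) * D i - W (i-1) * D (i-1)
    with hgdef
  have hWper : ∀ i : ℤ, W (i + N) = W i := by intro i; simp [hWdef, hV' i, hV i]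
  have hDper : ∀ i : ℤ, D (i + N) = D i := by intro i; simp [hDdef, hV' i, hV i]
  have hgper : ∀ i : ℤ, g (i + N) = g i := by
    intro i
    have h1 : (i + (N:ℤ)) - 1 = (i - 1) + N := by ring
    simp only [hgdef, hWper i, hDper i, h1, hWper (i-1), hDper (i-1)]
  -- LHS as a single sum
  have hL : (1/2) * ∑ i ∈ Finset.range N,
        (((V' (i+1) - V' i)/h)^2 + ((V' i - V' (i-1))/h)^2) * h
      - (1/2) * ∑ i ∈ Finset.range N,
        (((V (i+1) - V i)/h)^2 + ((V i - V (i-1))/h)^2) * h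
      = ∑ i ∈ Finset.range N,
        ((W (i+1) - W i) * (D (i+1) - D i) + (W i - W (i-1)) * (D i - D (i-1))) / (2*h) := by
    rw [Finset.mul_sum, Finset.mul_sum, ← Finset.sum_sub_distrib]
    apply Finset.sum_congr rfl
    intro i _
    simp only [hWdef, hDdef]
    field_simp
    ring
  -- RHS as a single sum
  have hR : - ∑ i ∈ Finset.range N,
        ((((V' (i+1) + V (i+1)) - 2*(V' i + V i) + (V' (i-1) + V (i-1)))/h^2)
          / (V' i + V i)) * ((V' i)^2 - (V i)^2) * h
      = ∑ i ∈ Finset.range N,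
        (2 * (2 * W i - W (i+1) - W (i-1)) * D i) / (2*h) := by
    rw [← Finset.sum_neg_distrib]
    apply Finset.sum_congr rfl
    intro i _
    simp only [hWdef, hDdef]
    have hni := hne i
    field_simp
    ring
  rw [hL, hR]
  -- difference telescopes
  have key : ∑ i ∈ Finset.range N,
      (((W (i+1) - W i) * (D (i+1) - D i) + (W i - W (i-1)) * (D i - D (i-1))) / (2*h)
        - (2 * (2 * W i - W (i+1) - W (i-1)) * D i) / (2*h))
      = ∑ i ∈ Finset.range N, (g (i+1) - g i) / (2*h) := by
    apply Finset.sum_congr rfl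
    intro i _
    have h1 : ((i:ℤ) + 1) - 1 = (i:ℤ) := by ring
    simp only [hgdef, h1]
    field_simp
    ring
  have tele : ∑ i ∈ Finset.range N, (g ((i:ℤ)+1) - g i) / (2*h) = 0 := by
    have : ∑ i ∈ Finset.range N, (g ((i:ℤ)+1) - g i) / (2*h)
        = (∑ i ∈ Finset.range N, g ((i:ℤ)+1) - ∑ i ∈ Finset.range N, g i) / (2*h) := by
      rw [← Finset.sum_div, Finset.sum_sub_distrib]
    rw [this, shift_sum_aux N g hgper]
    simp
  have := (Finset.sum_sub_distrib (s := Finset.range N)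
    (f := fun i => ((W ((i:ℤ)+1) - W i) * (D ((i:ℤ)+1) - D i)
        + (W i - W ((i:ℤ)-1)) * (D i - D ((i:ℤ)-1))) / (2*h))
    (g := fun i => (2 * (2 * W (i:ℤ) - W ((i:ℤ)+1) - W ((i:ℤ)-1)) * D i) / (2*h))).symm
  have hz : ∑ i ∈ Finset.range N,
      (((W ((i:ℤ)+1) - W i) * (D ((i:ℤ)+1) - D i) + (W i - W ((i:ℤ)-1)) * (D i - D ((i:ℤ)-1))) / (2*h)
        - (2 * (2 * W (i:ℤ) - W ((i:ℤ)+1) - W ((i:ℤ)-1)) * D i) / (2*h)) = 0 := by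
    rw [key]; exact tele
  have := this.trans hz
  linarith [this]
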